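/- (Greedy gap lemma for coverage.) Let D be a finite family of finite subsets of V, let k ≥ 1 be a natural number, and let D* be a finite nonempty family of finite subsets of V with |D*| ≤ k. Then there exists S ∈ D* whose marginal gain satisfies Δcov(S | D) ≥ (cov(D*) − cov(D)) / k; i.e. some member of the optimal family reduces the gap to cov(D*) by at least a 1/k fraction. -/

import Mathlib

open Finset

/-- Coverage of a finite family `D` of finite subsets of `V`: the number of
vertices covered by the members of `D`, i.e. the cardinality of their union. -/
def cov {V : Type*} [DecidableEq V] (D : Finset (Finset V)) : ℕ :=
  (D.sup id).card

/-- Greedy gap lemma for coverage: some member `S` of a nonempty family `D*`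
with `|D*| ≤ k` has marginal gain `Δcov(S | D) ≥ (cov(D*) − cov(D)) / k`. -/
theorem greedy_gap_lemma {V : Type*} [DecidableEq V]
    (D : Finset (Finset V)) (k : ℕ) (hk : 1 ≤ k)
    (Dstar : Finset (Finset V)) (hne : Dstar.Nonempty) (hcard : Dstar.card ≤ k) :
    ∃ S ∈ Dstar,
      ((cov Dstar : ℝ) - (cov D : ℝ)) / (k : ℝ) ≤
        (cov (insert S D) : ℝ) - (cov D : ℝ) := by
  classical
  set U := D.sup id with hU
  set T := Dstar.sup id with hT
  obtain ⟨S, hS, hSmax⟩ := Finset.exists_mem_eq_sup' hne (fun A => (A \ U).card)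
  refine ⟨S, hS, ?_⟩
  set g := (S \ U).card with hg
  have hcovins : cov (insert S D) = g + cov D := by
    have h1 : (insert S D).sup id = S ∪ U := by
      rw [Finset.sup_insert]; rfl
    have h2 : (S \ U).card + U.card = (S ∪ U).card := Finset.card_sdiff_add_card S U
    simp [cov, h1, ← h2, hg]; rfl
  -- combinatorial inequality: (T \ U).card ≤ ∑ A in Dstar, (A \ U).card
  have hsub : T \ U ⊆ Dstar.biUnion (fun A => A \ U) := by
    intro x hx
    rw [Finset.mem_sdiff] at hx
    obtain ⟨hxT, hxU⟩ := hx
    rw [hT, Finset.mem_sup] at hxT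
    obtain ⟨A, hA, hxA⟩ := hxT
    exact Finset.mem_biUnion.2 ⟨A, hA, Finset.mem_sdiff.2 ⟨hxA, hxU⟩⟩
  have hsum : (T \ U).card ≤ ∑ A ∈ Dstar, (A \ U).card :=
    le_trans (Finset.card_le_card hsub) (Finset.card_biUnion_le)
  have hbound : ∑ A ∈ Dstar, (A \ U).card ≤ Dstar.card * g := by
    have := Finset.sum_le_card_nsmul Dstar (fun A => (A \ U).card) g
      (fun A hA => hSmax ▸ Finset.le_sup' (fun A => (A \ U).card) hA)
    simpa using this
  have hchain : cov Dstar ≤ cov D + k * g := by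
    have h1 : cov Dstar ≤ (T \ U).card + cov D := Finset.card_le_card_sdiff_add_card
    have h2 : (T \ U).card ≤ k * g :=
      le_trans hsum (le_trans hbound (Nat.mul_le_mul_right g hcard))
    omega
  have hkpos : (0 : ℝ) < (k : ℝ) := by exact_mod_cast hk
  rw [div_le_iff₀ hkpos, hcovins]
  have : (cov Dstar : ℝ) ≤ (cov D : ℝ) + (k : ℝ) * (g : ℝ) := by exact_mod_cast hchain
  push_cast
  nlinarith [this]
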